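/- Let F be a class of functions bounded by 1 on Ω, and suppose {x₁,…,xₙ} is ε-shattered by F. Then the Rademacher average satisfies E_ε sup_{f∈F} |Σᵢ εᵢ f(xᵢ)| ≥ n·ε, where ε₁,…,εₙ are i.i.d. symmetric ±1 random variables. -/
import Mathlib


/-- The points `x 0, …, x (n-1)` are `ε`-shattered by the class `F`. -/
def ShatteredBy {Ω : Type*} (F : Set (Ω → ℝ)) {n : ℕ} (x : Fin n → Ω) (ε : ℝ) : Prop :=
  ∃ h : Fin n → ℝ, ∀ S : Finset (Fin n), ∃ f ∈ F,
    ∀ i, (i ∈ S → f (x i) ≤ h i - ε) ∧ (i ∉ S → h i + ε ≤ f (x i))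

/-- The Rademacher average (expectation over uniform random signs) of the supremum is
at least `n * ε` for an `ε`-shattered set. -/
theorem shattered_rademacher {Ω : Type*} (F : Set (Ω → ℝ))
    (hbdd : ∀ f ∈ F, ∀ ω, |f ω| ≤ 1) {n : ℕ} (x : Fin n → Ω) (ε : ℝ) (hε : 0 < ε)
    (hsh : ShatteredBy F x ε) :
    (n : ℝ) * ε ≤
      (∑ s : Fin n → Bool,
        ⨆ f : F, |∑ i, (if s i then (1 : ℝ) else -1) * (f : Ω → ℝ) (x i)|) / 2 ^ n := by
  obtain ⟨h, hh⟩ := hsh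
  have hbdd' : ∀ s : Fin n → Bool, BddAbove (Set.range fun f : F =>
      |∑ i, (if s i then (1 : ℝ) else -1) * (f : Ω → ℝ) (x i)|) := by
    intro s
    refine ⟨n, ?_⟩
    rintro _ ⟨f, rfl⟩
    calc |∑ i, (if s i then (1 : ℝ) else -1) * (f : Ω → ℝ) (x i)|
        ≤ ∑ i, |(if s i then (1 : ℝ) else -1) * (f : Ω → ℝ) (x i)| :=
          Finset.abs_sum_le_sum_abs _ _
      _ ≤ ∑ _i : Fin n, (1 : ℝ) := by
          apply Finset.sum_le_sum; intro i _
          rw [abs_mul]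
          have h1 : |(if s i then (1 : ℝ) else -1)| = 1 := by split <;> simp
          rw [h1, one_mul]
          exact hbdd f f.2 (x i)
      _ = n := by simp
  have key : ∀ s : Fin n → Bool,
      (∑ i, (if s i then (1 : ℝ) else -1) * h i) + n * ε ≤
      ⨆ f : F, |∑ i, (if s i then (1 : ℝ) else -1) * (f : Ω → ℝ) (x i)| := by
    intro s
    obtain ⟨f, hfF, hf⟩ := hh (Finset.univ.filter fun i => s i = false)
    have hle : (∑ i, (if s i then (1 : ℝ) else -1) * h i) + n * ε ≤
        ∑ i, (if s i then (1 : ℝ) else -1) * f (x i) := by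
      have hterm : ∀ i : Fin n,
          (if s i then (1 : ℝ) else -1) * h i + ε ≤ (if s i then (1 : ℝ) else -1) * f (x i) := by
        intro i
        rcases hf i with ⟨h1, h2⟩
        by_cases hsi : s i
        · simp only [hsi, if_true, one_mul]
          have := h2 (by simp [hsi])
          linarith
        · rw [if_neg hsi]
          have := h1 (by simp [hsi])
          linarith
      calc (∑ i, (if s i then (1 : ℝ) else -1) * h i) + n * ε
          = ∑ i : Fin n, ((if s i then (1 : ℝ) else -1) * h i + ε) := by
            rw [Finset.sum_add_distrib, Finset.sum_const, Finset.card_univ, Fintype.card_fin,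
              nsmul_eq_mul]
        _ ≤ _ := Finset.sum_le_sum fun i _ => hterm i
    refine hle.trans (le_trans (le_abs_self _) ?_)
    exact le_ciSup (hbdd' s) (⟨f, hfF⟩ : F)
  have hzero : ∑ s : Fin n → Bool, ∑ i, (if s i then (1 : ℝ) else -1) * h i = 0 := by
    rw [Finset.sum_comm]
    apply Finset.sum_eq_zero
    intro i _
    rw [← Finset.sum_mul]
    have hs : ∑ s : Fin n → Bool, (if s i then (1 : ℝ) else -1) = 0 := by
      rw [← ((Equiv.piSplitAt i fun _ => Bool).symm.sum_comp
        (fun s => if s i then (1 : ℝ) else -1))]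
      simp [Fintype.sum_prod_type, Equiv.piSplitAt]
    rw [hs, zero_mul]
  rw [le_div_iff₀ (by positivity)]
  calc (n : ℝ) * ε * 2 ^ n
      = ∑ s : Fin n → Bool, ((∑ i, (if s i then (1 : ℝ) else -1) * h i) + n * ε) := by
        rw [Finset.sum_add_distrib, hzero, zero_add, Finset.sum_const, Finset.card_univ,
          nsmul_eq_mul]
        simp [mul_comm]
    _ ≤ _ := Finset.sum_le_sum fun s _ => key s
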